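/- In the abstract affects setting, let T be a conical poset, let O be injective (non-degenerate embedding), and suppose O satisfies compat with respect to A. If A(X,Y,Z) holds and is Irred₃, then F̄_s(X) ∩ F̄_s(Y) ⊆ F̄_s(Z). -/
import Mathlib


/-- The causal future `J⁺(t) = {t' : t ≤ t'}` of a point in a partially ordered set. -/
def Jplus {T : Type*} [PartialOrder T] (t : T) : Set T := {t' : T | t ≤ t'}

/-- The support future `F̄_s(W) = ⋂_{w ∈ W} J⁺(O w)` of a finite set of random
variable labels under an embedding `O` (with `F̄_s(∅) = T`). -/
def suppFuture {S T : Type*} [PartialOrder T] (O : S → T) (W : Finset S) : Set T :=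
  ⋂ w ∈ W, Jplus (O w)

/-- `X ⊨ Y|do(Z)` is Irred₁ (relative to the set of affects relations `A`) if for
every nonempty strict subset `s_X ⊊ X`, `A s_X Y ((X∖s_X) ∪ Z)` holds. -/
def Irred1 {S : Type*} [DecidableEq S] (A : Finset S → Finset S → Finset S → Prop)
    (X Y Z : Finset S) : Prop :=
  ∀ sX : Finset S, sX ⊆ X → sX.Nonempty → sX ≠ X → A sX Y ((X \ sX) ∪ Z)

/-- `X ⊨ Y|do(Z)` is Irred₃ (relative to `A`) if for every nonempty `s_Z ⊆ Z`,
`A s_Z Y (X ∪ (Z∖s_Z))` holds or `A s_Z Y (Z∖s_Z)` holds. -/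
def Irred3 {S : Type*} [DecidableEq S] (A : Finset S → Finset S → Finset S → Prop)
    (X Y Z : Finset S) : Prop :=
  ∀ sZ : Finset S, sZ ⊆ Z → sZ.Nonempty →
    (A sZ Y (X ∪ (Z \ sZ)) ∨ A sZ Y (Z \ sZ))

/-- The embedding `O` satisfies compat with respect to `A` if for every triple of
pairwise disjoint finite sets with `X, Y` nonempty such that `A X Y Z` holds and is
Irred₁, one has `F̄_s(Y ∪ Z) ⊆ F̄_s(X)`. -/
def Compat {S T : Type*} [DecidableEq S] [PartialOrder T]
    (A : Finset S → Finset S → Finset S → Prop) (O : S → T) : Prop :=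
  ∀ X Y Z : Finset S, Disjoint X Y → Disjoint X Z → Disjoint Y Z →
    X.Nonempty → Y.Nonempty → A X Y Z → Irred1 A X Y Z →
    suppFuture O (Y ∪ Z) ⊆ suppFuture O X

/-- The joint future `f(L) = ⋂_{p ∈ L} J⁺(p)` of a subset of a poset (with `f(∅) = T`). -/
def jointFuture {T : Type*} [PartialOrder T] (L : Set T) : Set T := ⋂ p ∈ L, Jplus p

/-- The spanning set `span(L)`: the union of all subsets `L' ⊆ L` with
`f(L') = f(L)` such that no strict subset `L'' ⊊ L'` satisfies `f(L'') = f(L)`. -/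
def spanS {T : Type*} [PartialOrder T] (L : Set T) : Set T :=
  {x : T | ∃ L' : Set T, L' ⊆ L ∧ x ∈ L' ∧ jointFuture L' = jointFuture L ∧
    ∀ L'' : Set T, L'' ⊂ L' → jointFuture L'' ≠ jointFuture L}

/-- A poset is conical if for all nonempty finite subsets `L₁, L₂`,
`f(L₁) = f(L₂)` implies `span(L₁) = span(L₂)`. -/
def Conical (T : Type*) [PartialOrder T] : Prop :=
  ∀ L₁ L₂ : Set T, L₁.Finite → L₂.Finite → L₁.Nonempty → L₂.Nonempty →
    jointFuture L₁ = jointFuture L₂ → spanS L₁ = spanS L₂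


lemma jointFuture_anti {T : Type*} [PartialOrder T] {L1 L2 : Set T} (h : L1 ⊆ L2) :
    jointFuture L2 ⊆ jointFuture L1 := by
  intro t ht
  simp only [jointFuture, Set.mem_iInter] at *
  exact fun p hp => ht p (h hp)

lemma suppFuture_eq {S T : Type*} [PartialOrder T] (O : S → T) (W : Finset S) :
    suppFuture O W = jointFuture (O '' ↑W) := by
  simp [suppFuture, jointFuture, Set.biInter_image]

lemma suppFuture_anti {S T : Type*} [PartialOrder T] (O : S → T) {W1 W2 : Finset S}
    (h : W1 ⊆ W2) : suppFuture O W2 ⊆ suppFuture O W1 := by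
  intro t ht
  simp only [suppFuture, Set.mem_iInter] at *
  exact fun w hw => ht w (h hw)

lemma suppFuture_union {S T : Type*} [DecidableEq S] [PartialOrder T] (O : S → T)
    (A B : Finset S) : suppFuture O (A ∪ B) = suppFuture O A ∩ suppFuture O B := by
  ext t
  simp only [suppFuture, Set.mem_iInter, Set.mem_inter_iff, Finset.mem_union]
  constructor
  · intro h; exact ⟨fun w hw => h w (Or.inl hw), fun w hw => h w (Or.inr hw)⟩
  · rintro ⟨h1, h2⟩ w (hw | hw); exacts [h1 w hw, h2 w hw]

lemma suppFuture_singleton {S T : Type*} [PartialOrder T] (O : S → T) (z : S) :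
    suppFuture O {z} = Jplus (O z) := by
  simp [suppFuture]

lemma spanS_subset {T : Type*} [PartialOrder T] (L : Set T) : spanS L ⊆ L := by
  rintro x ⟨L', hL', hx, -, -⟩
  exact hL' hx

/-- In a conical space-time with a non-degenerate (injective) compatible embedding,
an affects relation `A X Y Z` that is Irred₃ satisfies
`F̄_s(X) ∩ F̄_s(Y) ⊆ F̄_s(Z)`. -/
theorem compat_conical_irred3 {S T : Type*} [DecidableEq S] [PartialOrder T]
    (A : Finset S → Finset S → Finset S → Prop) (O : S → T)
    (hT : Conical T) (hO : Function.Injective O) (hc : Compat A O)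
    (X Y Z : Finset S)
    (hXY : Disjoint X Y) (hXZ : Disjoint X Z) (hYZ : Disjoint Y Z)
    (hX : X.Nonempty) (hY : Y.Nonempty)
    (hA : A X Y Z) (h3 : Irred3 A X Y Z) :
    suppFuture O X ∩ suppFuture O Y ⊆ suppFuture O Z := by
  classical
  set U : Finset S := X ∪ Y ∪ Z with hU
  -- Step A: erasing any z ∈ Z does not lose the constraint J⁺(O z)
  have stepA : ∀ z ∈ Z, suppFuture O (U.erase z) ⊆ Jplus (O z) := by
    intro z hz
    have hzX : z ∉ X := fun h => Finset.disjoint_left.mp hXZ h hz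
    have hzY : z ∉ Y := fun h => Finset.disjoint_left.mp hYZ h hz
    have hirr1 : ∀ W : Finset S, Irred1 A {z} Y W := by
      intro W sX hsub hne hneq
      rcases Finset.subset_singleton_iff.mp hsub with h | h
      · exact absurd h (Finset.nonempty_iff_ne_empty.mp hne)
      · exact absurd h hneq
    have hzsY : Disjoint ({z} : Finset S) Y := by simp [hzY]
    have hzsZ : Disjoint ({z} : Finset S) (Z \ {z}) := by simp
    have hYZ' : Disjoint Y (Z \ {z}) := hYZ.mono_right (Finset.sdiff_subset)
    rcases h3 {z} (Finset.singleton_subset_iff.mpr hz) (Finset.singleton_nonempty z) with h | h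
    · have hzsXZ : Disjoint ({z} : Finset S) (X ∪ Z \ {z}) := by
        simp [Finset.disjoint_union_right, hzX]
      have hYXZ : Disjoint Y (X ∪ Z \ {z}) := by
        rw [Finset.disjoint_union_right]
        exact ⟨hXY.symm, hYZ'⟩
      have key := hc {z} Y (X ∪ Z \ {z}) hzsY hzsXZ hYXZ
        (Finset.singleton_nonempty z) hY h (hirr1 _)
      rw [suppFuture_singleton] at key
      have hset : U.erase z = Y ∪ (X ∪ Z \ {z}) := by
        ext a
        simp only [hU, Finset.mem_erase, Finset.mem_union, Finset.mem_sdiff,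
          Finset.mem_singleton]
        constructor
        · rintro ⟨hne, (ha | ha) | ha⟩
          · exact Or.inr (Or.inl ha)
          · exact Or.inl ha
          · exact Or.inr (Or.inr ⟨ha, hne⟩)
        · rintro (ha | ha | ⟨ha, hne⟩)
          · exact ⟨fun e => hzY (e ▸ ha), Or.inl (Or.inr ha)⟩
          · exact ⟨fun e => hzX (e ▸ ha), Or.inl (Or.inl ha)⟩
          · exact ⟨hne, Or.inr ha⟩
      rw [hset]
      exact key
    · have key := hc {z} Y (Z \ {z}) hzsY hzsZ hYZ'
        (Finset.singleton_nonempty z) hY h (hirr1 _)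
      rw [suppFuture_singleton] at key
      refine subset_trans (suppFuture_anti O ?_) key
      intro a ha
      rcases Finset.mem_union.mp ha with ha | ha
      · exact Finset.mem_erase.mpr ⟨fun e => hzY (e ▸ ha), by
          simp [hU, Finset.mem_union, ha]⟩
      · rcases Finset.mem_sdiff.mp ha with ⟨haZ, hane⟩
        exact Finset.mem_erase.mpr ⟨by simpa using hane, by
          simp [hU, Finset.mem_union, haZ]⟩
  set L : Finset T := U.image O with hL
  -- minimal M ⊆ L with same joint future
  have hGood : (L : Finset T) ∈ {M : Finset T | M ⊆ L ∧ jointFuture (↑M : Set T) = jointFuture (↑L : Set T)} := by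
    exact ⟨subset_rfl, rfl⟩
  obtain ⟨M, ⟨hML, hMf⟩, hmin⟩ :=
    (wellFounded_lt (α := Finset T)).has_min
      {M : Finset T | M ⊆ L ∧ jointFuture (↑M : Set T) = jointFuture (↑L : Set T)} ⟨L, hGood⟩
  -- L is nonempty via X
  obtain ⟨x0, hx0⟩ := hX
  have hx0U : x0 ∈ U := by simp [hU, Finset.mem_union, hx0]
  have hOx0L : O x0 ∈ L := Finset.mem_image_of_mem O hx0U
  -- Step C: M contains no O z for z ∈ Z
  have hMnoZ : ∀ z ∈ Z, O z ∉ M := by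
    intro z hz hzM
    have hzerase : O z ∉ L.erase (O z) := Finset.notMem_erase _ _
    -- O z ∈ spanS ↑L
    have hspan : O z ∈ spanS (↑L : Set T) := by
      refine ⟨↑M, by exact_mod_cast hML, hzM, hMf, ?_⟩
      intro L'' hsub hf
      have hfin : L''.Finite := M.finite_toSet.subset hsub.subset
      have hcoe : (hfin.toFinset : Set T) = L'' := hfin.coe_toFinset
      have hsub' : hfin.toFinset ⊆ M := by
        intro a ha
        exact hsub.subset (hfin.mem_toFinset.mp ha)
      have hne : hfin.toFinset ≠ M := by
        intro e
        apply hsub.ne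
        rw [← hcoe, e]
      have hlt : hfin.toFinset < M := lt_of_le_of_ne hsub' hne
      exact hmin hfin.toFinset ⟨hsub'.trans hML, by rw [hcoe, hf]⟩ hlt
    -- erase O z from L preserves joint future
    have himg : L.erase (O z) = (U.erase z).image O := by
      rw [hL, Finset.image_erase hO]
    have hzU : z ∈ U := by simp [hU, Finset.mem_union, hz]
    have hUins : U = insert z (U.erase z) := (Finset.insert_erase hzU).symm
    have hfU : suppFuture O U = Jplus (O z) ∩ suppFuture O (U.erase z) := by
      ext t
      simp only [suppFuture, Set.mem_iInter, Set.mem_inter_iff]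
      constructor
      · intro h
        exact ⟨h z hzU, fun w hw => h w (Finset.mem_of_mem_erase hw)⟩
      · rintro ⟨h1, h2⟩ w hw
        by_cases hwz : w = z
        · subst hwz; exact h1
        · exact h2 w (Finset.mem_erase.mpr ⟨hwz, hw⟩)
    have hLe : jointFuture (↑(L.erase (O z)) : Set T) = jointFuture (↑L : Set T) := by
      rw [himg, Finset.coe_image, ← suppFuture_eq, hL, Finset.coe_image,
        ← suppFuture_eq, hfU]
      exact (Set.inter_eq_self_of_subset_right (stepA z hz)).symm
    have hx0ne : O x0 ≠ O z := fun e => Finset.disjoint_left.mp hXZ hx0 (hO e ▸ hz)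
    have hx0e : O x0 ∈ L.erase (O z) := Finset.mem_erase.mpr ⟨hx0ne, hOx0L⟩
    have hcon := hT (↑L) (↑(L.erase (O z))) L.finite_toSet (L.erase (O z)).finite_toSet
      ⟨O x0, hOx0L⟩ ⟨O x0, hx0e⟩ hLe.symm
    have : O z ∈ spanS (↑(L.erase (O z)) : Set T) := hcon ▸ hspan
    exact hzerase (spanS_subset _ this)
  -- Step D: M ⊆ O '' (X ∪ Y)
  have hMXY : (↑M : Set T) ⊆ O '' ↑(X ∪ Y) := by
    intro m hm
    have hmL : m ∈ L := hML hm
    obtain ⟨s, hsU, hsm⟩ := Finset.mem_image.mp hmL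
    rcases Finset.mem_union.mp hsU with hs | hs
    · exact ⟨s, by exact_mod_cast hs, hsm⟩
    · exact absurd (hsm ▸ hm) (hMnoZ s hs)
  calc suppFuture O X ∩ suppFuture O Y = suppFuture O (X ∪ Y) := (suppFuture_union O X Y).symm
    _ = jointFuture (O '' ↑(X ∪ Y)) := suppFuture_eq O _
    _ ⊆ jointFuture (↑M : Set T) := jointFuture_anti hMXY
    _ = jointFuture (↑L : Set T) := hMf
    _ = suppFuture O U := by rw [suppFuture_eq, hL, Finset.coe_image]
    _ ⊆ suppFuture O Z := suppFuture_anti O (by intro a ha; simp [hU, Finset.mem_union, ha])
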